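/- Let X and B be 2×2 real matrices with trace(X) = 0 and trace(B) = 0, set M = X + B, and let λ, δ be nonzero real numbers with λ² = −det(M) and δ² = −det(X). Then the curve γ(t) = (cosh(tλ)·I + (sinh(tλ)/λ)·M) · (cosh(tδ)·I − (sinh(tδ)/δ)·X) satisfies γ(0) = I and γ′(t) = X·γ(t) − γ(t)·X + B·γ(t) for all t ∈ ℝ. (This is the explicit solution φ_t(u,e) = exp(tΣ_I)·exp(−tX) of a linear control system on SL(2,ℝ), where Σ_I = M = X + Σⱼ uⱼYⱼ is the matrix of the associated right-invariant system and B = Σⱼ uⱼYⱼ.) -/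

import Mathlib

attribute [local instance] Matrix.linftyOpNormedRing Matrix.linftyOpNormedAlgebra

/-- Explicit solution of a linear control system on `SL(2,ℝ)` with inner derivation `ad X`
and constant control: the curve
`γ(t) = (cosh(tλ)·I + (sinh(tλ)/λ)·M) * (cosh(tδ)·I - (sinh(tδ)/δ)·X)`, with `M = X + B`,
`λ² = -det M` and `δ² = -det X`, satisfies `γ(0) = I` and `γ' = Xγ - γX + Bγ`. -/
theorem sl2_linear_control_solution
    (X B M : Matrix (Fin 2) (Fin 2) ℝ) (hX : X.trace = 0) (hB : B.trace = 0)
    (hM : M = X + B)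
    (l d : ℝ) (hl : l ≠ 0) (hd : d ≠ 0) (hl2 : l ^ 2 = -M.det) (hd2 : d ^ 2 = -X.det)
    (γ : ℝ → Matrix (Fin 2) (Fin 2) ℝ)
    (hγ : ∀ t : ℝ, γ t =
      (Real.cosh (t * l) • (1 : Matrix (Fin 2) (Fin 2) ℝ) + (Real.sinh (t * l) / l) • M) *
        (Real.cosh (t * d) • (1 : Matrix (Fin 2) (Fin 2) ℝ) - (Real.sinh (t * d) / d) • X)) :
    γ 0 = 1 ∧ ∀ t : ℝ, HasDerivAt γ (X * γ t - γ t * X + B * γ t) t := by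
  have hγ' : γ = fun t =>
      (Real.cosh (t * l) • (1 : Matrix (Fin 2) (Fin 2) ℝ) + (Real.sinh (t * l) / l) • M) *
        (Real.cosh (t * d) • (1 : Matrix (Fin 2) (Fin 2) ℝ) - (Real.sinh (t * d) / d) • X) :=
    funext hγ
  subst hγ'
  -- Cayley–Hamilton for trace-zero 2×2 matrices
  have hMtr : M.trace = 0 := by rw [hM, Matrix.trace_add, hX, hB, add_zero]
  have hM2 : M * M = (l ^ 2) • (1 : Matrix (Fin 2) (Fin 2) ℝ) := by
    rw [Matrix.trace_fin_two] at hMtr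
    rw [Matrix.det_fin_two] at hl2
    ext i j
    fin_cases i <;> fin_cases j <;>
      simp [Matrix.mul_apply, Fin.sum_univ_two, Matrix.one_apply]
    · linear_combination -hl2 + M 0 0 * hMtr
    · linear_combination M 0 1 * hMtr
    · linear_combination M 1 0 * hMtr
    · linear_combination -hl2 + M 1 1 * hMtr
  have hX2 : X * X = (d ^ 2) • (1 : Matrix (Fin 2) (Fin 2) ℝ) := by
    rw [Matrix.trace_fin_two] at hX
    rw [Matrix.det_fin_two] at hd2
    ext i j
    fin_cases i <;> fin_cases j <;>
      simp [Matrix.mul_apply, Fin.sum_univ_two, Matrix.one_apply]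
    · linear_combination -hd2 + X 0 0 * hX
    · linear_combination X 0 1 * hX
    · linear_combination X 1 0 * hX
    · linear_combination -hd2 + X 1 1 * hX
  constructor
  · simp
  intro t
  set F : ℝ → Matrix (Fin 2) (Fin 2) ℝ := fun t =>
    Real.cosh (t * l) • (1 : Matrix (Fin 2) (Fin 2) ℝ) + (Real.sinh (t * l) / l) • M with hF
  set G : ℝ → Matrix (Fin 2) (Fin 2) ℝ := fun t =>
    Real.cosh (t * d) • (1 : Matrix (Fin 2) (Fin 2) ℝ) - (Real.sinh (t * d) / d) • X with hG
  have hcl : HasDerivAt (fun s => Real.cosh (s * l)) (Real.sinh (t * l) * l) t := by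
    exact (Real.hasDerivAt_cosh (t * l)).comp t (hasDerivAt_mul_const l)
  have hsl : HasDerivAt (fun s => Real.sinh (s * l) / l) (Real.cosh (t * l)) t := by
    have h := ((Real.hasDerivAt_sinh (t * l)).comp t (hasDerivAt_mul_const l)).div_const l
    have heq : Real.cosh (t * l) * l / l = Real.cosh (t * l) := by field_simp
    simpa [heq] using h
  have hcd : HasDerivAt (fun s => Real.cosh (s * d)) (Real.sinh (t * d) * d) t := by
    exact (Real.hasDerivAt_cosh (t * d)).comp t (hasDerivAt_mul_const d)
  have hsd : HasDerivAt (fun s => Real.sinh (s * d) / d) (Real.cosh (t * d)) t := by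
    have h := ((Real.hasDerivAt_sinh (t * d)).comp t (hasDerivAt_mul_const d)).div_const d
    have heq : Real.cosh (t * d) * d / d = Real.cosh (t * d) := by field_simp
    simpa [heq] using h
  have hFd : HasDerivAt F
      ((Real.sinh (t * l) * l) • (1 : Matrix (Fin 2) (Fin 2) ℝ) + Real.cosh (t * l) • M) t :=
    (hcl.smul_const (1 : Matrix (Fin 2) (Fin 2) ℝ)).add (hsl.smul_const M)
  have hGd : HasDerivAt G
      ((Real.sinh (t * d) * d) • (1 : Matrix (Fin 2) (Fin 2) ℝ) - Real.cosh (t * d) • X) t :=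
    (hcd.smul_const (1 : Matrix (Fin 2) (Fin 2) ℝ)).sub (hsd.smul_const X)
  have hscl : Real.sinh (t * l) / l * l ^ 2 = Real.sinh (t * l) * l := by
    field_simp
  have hscd : Real.sinh (t * d) / d * d ^ 2 = Real.sinh (t * d) * d := by
    field_simp
  have hFeq : (Real.sinh (t * l) * l) • (1 : Matrix (Fin 2) (Fin 2) ℝ) + Real.cosh (t * l) • M
      = M * F t := by
    simp only [hF, mul_add, Matrix.mul_smul, mul_one, hM2, smul_smul, hscl]
    rw [add_comm]
  have hGeq : (Real.sinh (t * d) * d) • (1 : Matrix (Fin 2) (Fin 2) ℝ) - Real.cosh (t * d) • X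
      = -(X * G t) := by
    simp only [hG, mul_sub, Matrix.mul_smul, mul_one, hX2, smul_smul, hscd, neg_sub]
  have hXG : X * G t = G t * X := by
    simp only [hG, sub_mul, mul_sub, Matrix.mul_smul, Matrix.smul_mul, mul_one, one_mul]
  have hd2' := hFd.mul hGd
  rw [hFeq, hGeq] at hd2'
  have hgoal : ∀ P Q : Matrix (Fin 2) (Fin 2) ℝ, X * Q = Q * X →
      M * P * Q + P * -(X * Q) = X * (P * Q) - P * Q * X + B * (P * Q) := by
    intro P Q h
    rw [hM, mul_neg, h, ← Matrix.mul_assoc]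
    noncomm_ring
  show HasDerivAt (fun s => F s * G s)
    (X * (F t * G t) - F t * G t * X + B * (F t * G t)) t
  rw [← hgoal (F t) (G t) hXG]
  exact hd2'
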